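/- arXiv:2411.09832 — 3 statements merged into one kernel-verified Lean document; each statement's English description precedes it below -/
import Mathlib

section
/- For an interval hypergraph 𝕀 on [n], the hypergraphic poset P_𝕀 is a lattice (i.e., every pair of acyclic orientations of 𝕀 admits a least upper bound and a greatest lower bound in P_𝕀) if and only if 𝕀 is closed under intersection. -/
namespace IHL

/-- The hyperedges of a hypergraph, as a subtype. -/
abbrev Edge (𝕀 : Finset (Finset ℕ)) : Type := {H : Finset ℕ // H ∈ 𝕀}

/-- `ℋ` is a hypergraph on `[n] = {1,…,n}`: hyperedges are nonempty subsets of `[n]`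
and all singletons belong to `ℋ`. -/
def IsHypergraph (n : ℕ) (ℋ : Finset (Finset ℕ)) : Prop :=
  (∀ H ∈ ℋ, H.Nonempty ∧ H ⊆ Finset.Icc 1 n) ∧
    ∀ i, 1 ≤ i → i ≤ n → ({i} : Finset ℕ) ∈ ℋ

/-- `𝕀` is an interval hypergraph on `[n]`: hyperedges are intervals `[a,b] ⊆ [n]`
and all singletons belong to `𝕀`. -/
def IsIntervalHypergraph (n : ℕ) (𝕀 : Finset (Finset ℕ)) : Prop :=
  (∀ H ∈ 𝕀, ∃ a b, 1 ≤ a ∧ a ≤ b ∧ b ≤ n ∧ H = Finset.Icc a b) ∧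
    ∀ i, 1 ≤ i → i ≤ n → ({i} : Finset ℕ) ∈ 𝕀

/-- An orientation assigns to each hyperedge one of its elements. -/
def IsOrientation (𝕀 : Finset (Finset ℕ)) (O : Edge 𝕀 → ℕ) : Prop :=
  ∀ H : Edge 𝕀, O H ∈ H.1

/-- Acyclicity: there is no cyclic sequence `H_0, …, H_k` with `k ≥ 2`, `H_k = H_0`, and
`O (H (p+1)) ∈ H p \ {O (H p)}` for all `p < k`. -/
def IsAcyclic (𝕀 : Finset (Finset ℕ)) (O : Edge 𝕀 → ℕ) : Prop :=
  ¬∃ (k : ℕ) (H : ℕ → Edge 𝕀), 2 ≤ k ∧ H k = H 0 ∧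
    ∀ p < k, O (H (p + 1)) ∈ (H p).1 ∧ O (H (p + 1)) ≠ O (H p)

/-- An acyclic orientation, i.e. an element of the hypergraphic poset. -/
def AcycOr (𝕀 : Finset (Finset ℕ)) (O : Edge 𝕀 → ℕ) : Prop :=
  IsOrientation 𝕀 O ∧ IsAcyclic 𝕀 O

/-- Increasing flip from `O` to `O'` flipping `i` to `j`. -/
def IsIncFlip (n : ℕ) (𝕀 : Finset (Finset ℕ)) (i j : ℕ) (O O' : Edge 𝕀 → ℕ) : Prop :=
  O ≠ O' ∧ 1 ≤ i ∧ i < j ∧ j ≤ n ∧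
    ∀ H : Edge 𝕀,
      (O H ≠ O' H → O H = i ∧ O' H = j) ∧
      (i ∈ H.1 → j ∈ H.1 → (O H = i ↔ O' H = j))

/-- One increasing flip step between acyclic orientations. -/
def FlipStep (n : ℕ) (𝕀 : Finset (Finset ℕ)) (O O' : Edge 𝕀 → ℕ) : Prop :=
  AcycOr 𝕀 O ∧ AcycOr 𝕀 O' ∧ ∃ i j, IsIncFlip n 𝕀 i j O O'

/-- The order of the hypergraphic poset `P_𝕀`: reflexive-transitive closure of
the increasing flip relation on acyclic orientations. -/
def leP (n : ℕ) (𝕀 : Finset (Finset ℕ)) : (Edge 𝕀 → ℕ) → (Edge 𝕀 → ℕ) → Prop :=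
  Relation.ReflTransGen (FlipStep n 𝕀)

/-- Strict order of the hypergraphic poset. -/
def ltP (n : ℕ) (𝕀 : Finset (Finset ℕ)) (A B : Edge 𝕀 → ℕ) : Prop :=
  leP n 𝕀 A B ∧ A ≠ B

/-- `B` covers `A` in `P_𝕀`. -/
def CoversP (n : ℕ) (𝕀 : Finset (Finset ℕ)) (A B : Edge 𝕀 → ℕ) : Prop :=
  ltP n 𝕀 A B ∧ ¬∃ C, AcycOr 𝕀 C ∧ ltP n 𝕀 A C ∧ ltP n 𝕀 C B

/-- `𝕀` is closed under intersection. -/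
def ClosedUnderIntersection (𝕀 : Finset (Finset ℕ)) : Prop :=
  ∀ I ∈ 𝕀, ∀ J ∈ 𝕀, (I ∩ J).Nonempty → I ∩ J ∈ 𝕀

/-- `π` is a permutation of `[n]` (it fixes everything outside `[1,n]`). -/
def IsPermOn (n : ℕ) (π : Equiv.Perm ℕ) : Prop :=
  ∀ x, x ∉ Finset.Icc 1 n → π x = x

/-- The surjection `Or` from permutations to acyclic orientations:
`Or_π (H) = π (min {p : π p ∈ H})`. -/
noncomputable def orMap (𝕀 : Finset (Finset ℕ)) (π : Equiv.Perm ℕ) : Edge 𝕀 → ℕ :=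
  fun H => π (sInf {p | π p ∈ H.1})

/-- The weak order on permutations of `[n]`, via inclusion of inversion sets. -/
def weakLe (n : ℕ) (σ τ : Equiv.Perm ℕ) : Prop :=
  ∀ a b, 1 ≤ a → a < b → b ≤ n → σ.symm b < σ.symm a → τ.symm b < τ.symm a

/-- `π` contains the pattern 231. -/
def Contains231 (n : ℕ) (π : Equiv.Perm ℕ) : Prop :=
  ∃ p q r, 1 ≤ p ∧ p < q ∧ q < r ∧ r ≤ n ∧ π r < π p ∧ π p < π q

/-- `π` contains the pattern 213. -/
def Contains213 (n : ℕ) (π : Equiv.Perm ℕ) : Prop :=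
  ∃ p q r, 1 ≤ p ∧ p < q ∧ q < r ∧ r ≤ n ∧ π q < π p ∧ π p < π r

/-- The partial order `≺_A`: transitive closure of `A H ≺ h` for `h ∈ H \ {A H}`. -/
def prec (𝕀 : Finset (Finset ℕ)) (A : Edge 𝕀 → ℕ) : ℕ → ℕ → Prop :=
  Relation.TransGen fun a b => ∃ H : Edge 𝕀, A H = a ∧ b ∈ H.1 ∧ b ≠ a

/-- The distributivity condition on interval hypergraphs: for all `I, J ∈ 𝕀` with
`I ⊈ J`, `J ⊈ I` and `I ∩ J ≠ ∅`, the intersection `I ∩ J` is in `𝕀` and is initial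
or final in any `K ∈ 𝕀` containing it. -/
def IsDistribHG (𝕀 : Finset (Finset ℕ)) : Prop :=
  ∀ I ∈ 𝕀, ∀ J ∈ 𝕀, ¬I ⊆ J → ¬J ⊆ I → (I ∩ J).Nonempty →
    (I ∩ J ∈ 𝕀 ∧ ∀ K ∈ 𝕀, I ∩ J ⊆ K → ((I ∩ J).min = K.min ∨ (I ∩ J).max = K.max))

/-- `j ∈ 𝒥_𝕀 = ⋃_{I ∈ 𝕀} (I \ {min I})`. -/
def InJI (𝕀 : Finset (Finset ℕ)) (j : ℕ) : Prop :=
  ∃ I ∈ 𝕀, j ∈ I ∧ ∃ y ∈ I, y < j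

/-- `Jj` is the interval `J_j = ⋂ {I ∈ 𝕀 : j ∈ I \ {min I}}`. -/
def IsJj (𝕀 : Finset (Finset ℕ)) (j : ℕ) (Jj : Finset ℕ) : Prop :=
  ∀ x, x ∈ Jj ↔ ∀ I ∈ 𝕀, j ∈ I → (∃ y ∈ I, y < j) → x ∈ I

/-- `Aj` is the orientation `A_j` (where `μj = min J_j`):
`A_j (J) = j` if `j ∈ J` and `min J = μ_j`, and `A_j (J) = min J` otherwise. -/
def IsAj (𝕀 : Finset (Finset ℕ)) (j μj : ℕ) (Aj : Edge 𝕀 → ℕ) : Prop :=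
  ∀ J : Edge 𝕀,
    (j ∈ J.1 ∧ IsLeast (J.1 : Set ℕ) μj → Aj J = j) ∧
    (¬(j ∈ J.1 ∧ IsLeast (J.1 : Set ℕ) μj) → IsLeast (J.1 : Set ℕ) (Aj J))

/-- `Jij` is the interval `J_{ij} = ⋂ {I ∈ 𝕀 : {i,j} ⊆ I}`. -/
def IsJij (𝕀 : Finset (Finset ℕ)) (i j : ℕ) (Jij : Finset ℕ) : Prop :=
  ∀ x, x ∈ Jij ↔ ∀ I ∈ 𝕀, i ∈ I → j ∈ I → x ∈ I

/-- `(i,j) ∈ ℐ𝒥_𝕀`, where `μij = min J_{ij}`: both lie in a common hyperedge and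
`i = max ([μ_{ij}, j) \ ⋃ {J \ {min J} : J ∈ 𝕀, J ⊆ [μ_{ij}, j)})`. -/
def InIJ (n : ℕ) (𝕀 : Finset (Finset ℕ)) (i j μij : ℕ) : Prop :=
  1 ≤ i ∧ i < j ∧ j ≤ n ∧ (∃ I ∈ 𝕀, i ∈ I ∧ j ∈ I) ∧
    IsGreatest {m | μij ≤ m ∧ m < j ∧
      ∀ J ∈ 𝕀, (∀ x ∈ J, μij ≤ x ∧ x < j) → m ∈ J → ∀ y ∈ J, m ≤ y} i

/-- `Aij` is the orientation `A_{ij}` (where `μij = min J_{ij}`):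
`A_{ij} (J) = j` if `j ∈ J` and `min J ≥ μ_{ij}`, and `A_{ij} (J) = min J` otherwise. -/
def IsAij (𝕀 : Finset (Finset ℕ)) (j μij : ℕ) (Aij : Edge 𝕀 → ℕ) : Prop :=
  ∀ J : Edge 𝕀,
    (j ∈ J.1 ∧ (∀ x ∈ J.1, μij ≤ x) → Aij J = j) ∧
    (¬(j ∈ J.1 ∧ (∀ x ∈ J.1, μij ≤ x)) → IsLeast (J.1 : Set ℕ) (Aij J))

/-- The reversal `x ↦ n - x + 1` on `[n]`. -/
def revPt (n x : ℕ) : ℕ := n - x + 1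

/-- The reversed hypergraph `ℋ↔`. -/
def revHG (n : ℕ) (ℋ : Finset (Finset ℕ)) : Finset (Finset ℕ) :=
  ℋ.image fun H => H.image (revPt n)

/-! ### Auxiliary development -/

section Aux

variable {n : ℕ} {𝕀 : Finset (Finset ℕ)}

/-- No 2-cycle condition. -/
def No2 (𝕀 : Finset (Finset ℕ)) (O : Edge 𝕀 → ℕ) : Prop :=
  ∀ P Q : Edge 𝕀, O P ∈ Q.1 → O Q ∈ P.1 → O P = O Q

lemma edge_nonempty (h𝕀 : IsIntervalHypergraph n 𝕀) (H : Edge 𝕀) : H.1.Nonempty := by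
  obtain ⟨a, b, _, hab, _, hH⟩ := h𝕀.1 H.1 H.2
  exact ⟨a, by simp [hH, Finset.mem_Icc, hab]⟩

lemma edge_subset (h𝕀 : IsIntervalHypergraph n 𝕀) (H : Edge 𝕀) :
    H.1 ⊆ Finset.Icc 1 n := by
  obtain ⟨a, b, h1, hab, hbn, hH⟩ := h𝕀.1 H.1 H.2
  intro x hx
  rw [hH, Finset.mem_Icc] at hx
  rw [Finset.mem_Icc]
  omega

lemma edge_bounds (h𝕀 : IsIntervalHypergraph n 𝕀) (H : Edge 𝕀) {x : ℕ} (hx : x ∈ H.1) :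
    1 ≤ x ∧ x ≤ n := by
  have := edge_subset h𝕀 H hx
  rw [Finset.mem_Icc] at this; exact this

lemma edge_convex (h𝕀 : IsIntervalHypergraph n 𝕀) (H : Edge 𝕀) {x y z : ℕ}
    (hx : x ∈ H.1) (hy : y ∈ H.1) (hxz : x ≤ z) (hzy : z ≤ y) : z ∈ H.1 := by
  obtain ⟨a, b, _, _, _, hH⟩ := h𝕀.1 H.1 H.2
  rw [hH, Finset.mem_Icc] at hx hy ⊢
  omega

/-- Acyclic implies no 2-cycle. -/
lemma no2_of_acyclic {O : Edge 𝕀 → ℕ} (hO : IsAcyclic 𝕀 O) : No2 𝕀 O := by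
  intro P Q hPQ hQP
  by_contra hne
  apply hO
  refine ⟨2, fun t => if t = 1 then Q else P, le_refl 2, by norm_num, ?_⟩
  intro p hp
  interval_cases p <;> simp_all <;> exact fun h => hne h.symm

/-- Cycle implies 2-cycle for interval hypergraphs. -/
lemma exists_two_cycle (h𝕀 : IsIntervalHypergraph n 𝕀) {O : Edge 𝕀 → ℕ}
    (hor : IsOrientation 𝕀 O) :
    ∀ k, 2 ≤ k → ∀ H : ℕ → Edge 𝕀, H k = H 0 →
      (∀ p < k, O (H (p + 1)) ∈ (H p).1 ∧ O (H (p + 1)) ≠ O (H p)) →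
      ∃ P Q : Edge 𝕀, O P ∈ Q.1 ∧ O Q ∈ P.1 ∧ O P ≠ O Q := by
  intro k
  induction k using Nat.strong_induction_on with
  | _ k IH =>
  intro hk2 H hk0 hstep
  rcases eq_or_lt_of_le hk2 with hk | hk3
  · -- k = 2
    subst hk
    refine ⟨H 0, H 1, ?_, ?_, ?_⟩
    · have := (hstep 1 (by norm_num)).1; rwa [hk0] at this
    · exact (hstep 0 (by norm_num)).1
    · have := (hstep 0 (by norm_num)).2; exact fun h => this h.symm
  · -- k ≥ 3
    obtain ⟨p, hpmem, hpmin⟩ := Finset.exists_min_image (Finset.range k)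
      (fun q => O (H q)) ⟨0, Finset.mem_range.2 (by omega)⟩
    rw [Finset.mem_range] at hpmem
    set m := O (H p) with hm
    set prev := if p = 0 then k - 1 else p - 1 with hprev
    have hprevk : prev < k := by rw [hprev]; split <;> omega
    have hstep_prev : O (H p) ∈ (H prev).1 ∧ O (H p) ≠ O (H prev) := by
      rw [hprev]
      split
      · rename_i h0; subst h0
        have := hstep (k - 1) (by omega)
        rw [show k - 1 + 1 = k by omega, hk0] at this
        exact this
      · rename_i h0
        have := hstep (p - 1) (by omega)
        rwa [show p - 1 + 1 = p by omega] at this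
    set a := O (H prev) with ha
    have hma : m < a := by
      have := hpmin prev (Finset.mem_range.2 hprevk)
      have hne := hstep_prev.2
      omega
    have hstepp := hstep p hpmem
    set b := O (H (p + 1)) with hb
    have hmb : m < b := by
      rcases eq_or_lt_of_le (Nat.succ_le_of_lt hpmem) with h | h
      · have : O (H (p+1)) = O (H 0) := by rw [show p + 1 = k from h, hk0]
        have := hpmin 0 (Finset.mem_range.2 (by omega))
        have hne := hstepp.2
        omega
      · have := hpmin (p+1) (Finset.mem_range.2 (by omega))
        have hne := hstepp.2
        omega
    rcases le_or_gt a b with hab | hba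
    · -- 2-cycle between H prev and H p
      have haHp : a ∈ (H p).1 :=
        edge_convex h𝕀 (H p) (hor (H p)) hstepp.1 (le_of_lt hma) hab
      exact ⟨H prev, H p, haHp, hstep_prev.1, fun h => absurd h.symm (ne_of_lt hma)⟩
    · -- shorten the cycle
      have hbHprev : b ∈ (H prev).1 :=
        edge_convex h𝕀 (H prev) hstep_prev.1 (hor (H prev)) (le_of_lt hmb) (le_of_lt hba)
      rcases Nat.eq_zero_or_pos p with hp0 | hp1
      · -- p = 0
        subst hp0
        refine IH (k - 1) (by omega) (by omega)
          (fun q => if q < k - 1 then H (q + 1) else H 1) ?_ ?_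
        · simp only [lt_irrefl, if_neg, if_pos (show (0:ℕ) < k - 1 by omega)]
          simp
        · intro q hq
          have hq' : q < k - 1 := hq
          rcases lt_or_ge (q + 1) (k - 1) with h1 | h1
          · simp only [if_pos hq', if_pos h1]
            exact hstep (q + 1) (by omega)
          · have hqe : q + 1 = k - 1 := by omega
            simp only [if_pos hq', if_neg (show ¬ q + 1 < k - 1 by omega)]
            have : H (q + 1) = H (k - 1) := by rw [hqe]
            rw [this]
            have hpr : prev = k - 1 := by rw [hprev]; simp
            rw [← hpr]
            exact ⟨hbHprev, fun h => absurd h (by rw [← hb, ← ha]; omega)⟩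
      · -- p ≥ 1
        have hpr : prev = p - 1 := by rw [hprev]; simp [Nat.pos_iff_ne_zero.1 hp1]
        refine IH (k - 1) (by omega) (by omega)
          (fun q => if q < p then H q else H (q + 1)) ?_ ?_
        · have h0 : (0:ℕ) < p := hp1
          simp only [if_pos h0]
          have : ¬ (k - 1 < p) := by omega
          simp only [if_neg this]
          rw [show k - 1 + 1 = k by omega, hk0]
        · intro q hq
          rcases lt_or_ge (q + 1) p with h1 | h1
          · simp only [if_pos h1, if_pos (show q < p by omega)]
            exact hstep q (by omega)
          · rcases eq_or_lt_of_le h1 with h2 | h2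
            · -- q + 1 = p
              simp only [if_neg (show ¬ q + 1 < p by omega), if_pos (show q < p by omega)]
              rw [show q + 1 + 1 = p + 1 by omega, show q = p - 1 by omega, ← hpr]
              exact ⟨hbHprev, fun h => absurd h (by rw [← hb, ← ha]; omega)⟩
            · -- q ≥ p
              simp only [if_neg (show ¬ q + 1 < p by omega),
                if_neg (show ¬ q < p by omega)]
              exact hstep (q + 1) (by omega)

lemma acyclic_of_no2 (h𝕀 : IsIntervalHypergraph n 𝕀) {O : Edge 𝕀 → ℕ}
    (hor : IsOrientation 𝕀 O) (h2 : No2 𝕀 O) : IsAcyclic 𝕀 O := by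
  rintro ⟨k, H, hk2, hk0, hstep⟩
  obtain ⟨P, Q, h1, h2', h3⟩ := exists_two_cycle h𝕀 hor k hk2 H hk0 hstep
  exact h3 (h2 P Q h1 h2')

end Aux
section Flips

variable {n : ℕ} {𝕀 : Finset (Finset ℕ)}

lemma flipStep_mono {A B : Edge 𝕀 → ℕ} (h : FlipStep n 𝕀 A B) :
    ∀ H, A H ≤ B H := by
  obtain ⟨_, _, i, j, _, _, hij, _, hflip⟩ := h
  intro H
  rcases eq_or_ne (A H) (B H) with h | h
  · omega
  · have := (hflip H).1 h
    omega

/-- leP implies pointwise order. -/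
lemma leP_mono {A B : Edge 𝕀 → ℕ} (h : leP n 𝕀 A B) : ∀ H, A H ≤ B H := by
  induction h with
  | refl => exact fun H => le_refl _
  | tail _ hstep ih => exact fun H => le_trans (ih H) (flipStep_mono hstep H)

/-- Pointwise order implies leP (decomposition into increasing flips). -/
lemma leP_of_mono (h𝕀 : IsIntervalHypergraph n 𝕀) {A B : Edge 𝕀 → ℕ}
    (hA : AcycOr 𝕀 A) (hB : AcycOr 𝕀 B) (hAB : ∀ H, A H ≤ B H) :
    leP n 𝕀 A B := by
  classical
  set μ := fun (X : Edge 𝕀 → ℕ) => ∑ H : Edge 𝕀, (B H - X H) with hμ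
  have main : ∀ m, ∀ A : Edge 𝕀 → ℕ, AcycOr 𝕀 A → (∀ H, A H ≤ B H) →
      μ A ≤ m → leP n 𝕀 A B := by
    intro m
    induction m with
    | zero =>
      intro A hA hAB hm
      have : ∀ H : Edge 𝕀, B H - A H = 0 := by
        intro H
        have : μ A = 0 := Nat.le_zero.1 hm
        rw [hμ] at this
        exact (Finset.sum_eq_zero_iff.1 this) H (Finset.mem_univ H)
      have : A = B := funext fun H => by have h1 := hAB H; have h2 := this H; omega
      rw [this]
      exact Relation.ReflTransGen.refl
    | succ m IH =>
      intro A hA hAB hm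
      rcases eq_or_ne A B with rfl | hne
      · exact Relation.ReflTransGen.refl
      · -- construct a flip
        have hSne : ∃ H : Edge 𝕀, A H < B H := by
          by_contra hc
          push_neg at hc
          exact hne (funext fun H => le_antisymm (hAB H) (hc H))
        set S : Finset (Edge 𝕀) := Finset.univ.filter (fun H => A H < B H) with hS
        have hSne' : S.Nonempty := by
          obtain ⟨H, hH⟩ := hSne
          exact ⟨H, by simp [hS, hH]⟩
        obtain ⟨H1, hH1S, hH1max⟩ := Finset.exists_max_image S A hSne'
        set i := A H1 with hi
        set T : Finset (Edge 𝕀) := S.filter (fun H => A H = i) with hT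
        have hTne : T.Nonempty := ⟨H1, by simp [hT, hH1S, hi]⟩
        obtain ⟨H0, hH0T, hH0max⟩ := Finset.exists_max_image T B hTne
        set j := B H0 with hj
        have hH0S : H0 ∈ S := (Finset.mem_filter.1 hH0T).1
        have hH0i : A H0 = i := (Finset.mem_filter.1 hH0T).2
        have hij : i < j := by
          have := (Finset.mem_filter.1 hH0S).2
          omega
        have hiH0 : i ∈ H0.1 := hH0i ▸ hA.1 H0
        have hjH0 : j ∈ H0.1 := hB.1 H0
        have hno2A : No2 𝕀 A := no2_of_acyclic hA.2
        have hno2B : No2 𝕀 B := no2_of_acyclic hB.2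
        -- maximality of i over S
        have hmaxi : ∀ H : Edge 𝕀, A H < B H → A H ≤ i := by
          intro H hH
          exact hH1max H (by simp [hS, hH])
        -- maximality of j over T
        have hmaxj : ∀ H : Edge 𝕀, A H < B H → A H = i → B H ≤ j := by
          intro H h1 h2
          have hmem : H ∈ T := by
            simp only [hT, hS, Finset.mem_filter, Finset.mem_univ, true_and]
            exact ⟨h1, h2⟩
          exact hH0max H hmem
        set A' := fun H : Edge 𝕀 => if i ∈ H.1 ∧ j ∈ H.1 ∧ A H = i then j else A H
          with hA'
        have hflipval : ∀ H : Edge 𝕀, (i ∈ H.1 ∧ j ∈ H.1 ∧ A H = i) → A' H = j := by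
          intro H h; simp [hA', h]
        have hsameval : ∀ H : Edge 𝕀, ¬(i ∈ H.1 ∧ j ∈ H.1 ∧ A H = i) → A' H = A H := by
          intro H h; simp [hA', h]
        -- flipped edges have B H = j
        have hBj : ∀ H : Edge 𝕀, i ∈ H.1 → j ∈ H.1 → A H = i → B H = j := by
          intro H hiH hjH hAHi
          have hBge : j ≤ B H := by
            by_contra hc
            push_neg at hc
            have hBHi : i ≤ B H := hAHi ▸ hAB H
            have hBH0 : B H ∈ H0.1 := edge_convex h𝕀 H0 hiH0 hjH0 hBHi (le_of_lt hc)
            have := hno2B H0 H hjH hBH0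
            omega
          have hBle : B H ≤ j := hmaxj H (by omega) hAHi
          omega
        -- orientation
        have horA' : IsOrientation 𝕀 A' := by
          intro H
          rw [hA']
          dsimp only
          split
          · rename_i h; exact h.2.1
          · exact hA.1 H
        -- A' ≤ B
        have hA'B : ∀ H, A' H ≤ B H := by
          intro H
          rw [hA']
          dsimp only
          split
          · rename_i h; rw [hBj H h.1 h.2.1 h.2.2]
          · exact hAB H
        -- A ≤ A' and A ≠ A'
        have hAA' : ∀ H, A H ≤ A' H := by
          intro H
          rw [hA']; dsimp only; split
          · rename_i h; omega
          · exact le_refl _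
        have hH0flip : A' H0 = j := hflipval H0 ⟨hiH0, hjH0, hH0i⟩
        have hAneA' : A ≠ A' := by
          intro h
          have : A H0 = A' H0 := congrFun h H0
          rw [hH0flip] at this
          omega
        -- key: A H = j with i,j ∈ H impossible
        have hnotj : ∀ H : Edge 𝕀, i ∈ H.1 → j ∈ H.1 → A H ≠ j := by
          intro H hiH hjH hc
          have e1 : A H0 ∈ H.1 := by rw [hH0i]; exact hiH
          have e2 : A H ∈ H0.1 := by rw [hc]; exact hjH0
          have := hno2A H0 H e1 e2
          omega
        -- No2 for A'
        have hno2A' : No2 𝕀 A' := by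
          intro H K hHK hKH
          by_cases hHf : i ∈ H.1 ∧ j ∈ H.1 ∧ A H = i
          · by_cases hKf : i ∈ K.1 ∧ j ∈ K.1 ∧ A K = i
            · rw [hflipval H hHf, hflipval K hKf]
            · -- H flipped, K not
              rw [hflipval H hHf] at hHK ⊢
              rw [hsameval K hKf] at hKH ⊢
              -- hHK : j ∈ K.1, hKH : A K ∈ H.1, goal : j = A K
              by_contra hne'
              have hiK : i ∉ K.1 := by
                intro hiK
                have e1 : A H ∈ K.1 := by rw [hHf.2.2]; exact hiK
                have e2 := hno2A K H hKH e1
                exact hKf ⟨hiK, hHK, by rw [e2, hHf.2.2]⟩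
              -- min K > i, so A K > i
              have hAKi : i < A K := by
                by_contra hc
                push_neg at hc
                obtain ⟨s, e, _, _, _, hKe⟩ := h𝕀.1 K.1 K.2
                have h1 : A K ∈ K.1 := hA.1 K
                rw [hKe, Finset.mem_Icc] at h1
                have h2 := hHK
                rw [hKe, Finset.mem_Icc] at h2
                exact hiK (by rw [hKe, Finset.mem_Icc]; omega)
              have hKnotS : A K = B K := by
                rcases eq_or_lt_of_le (hAB K) with h | h
                · exact h
                · have := hmaxi K h; omega
              rcases lt_trichotomy (A K) j with h | h | h
              · -- i < A K < j : A K ∈ H0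
                have hAKH0 : A K ∈ H0.1 :=
                  edge_convex h𝕀 H0 hiH0 hjH0 (le_of_lt hAKi) (le_of_lt h)
                have e1 : B H0 ∈ K.1 := by rw [← hj]; exact hHK
                have e2 : B K ∈ H0.1 := by rw [← hKnotS]; exact hAKH0
                have := hno2B H0 K e1 e2
                omega
              · exact hne' h.symm
              · -- A K > j : use B H = j
                have hBH : B H = j := hBj H hHf.1 hHf.2.1 hHf.2.2
                have e1 : B H ∈ K.1 := by rw [hBH]; exact hHK
                have e2 : B K ∈ H.1 := by rw [← hKnotS]; exact hKH
                have := hno2B H K e1 e2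
                omega
          · by_cases hKf : i ∈ K.1 ∧ j ∈ K.1 ∧ A K = i
            · -- K flipped, H not
              rw [hsameval H hHf] at hHK ⊢
              rw [hflipval K hKf] at hKH ⊢
              -- hHK : A H ∈ K.1, hKH : j ∈ H.1, goal : A H = j
              by_contra hne'
              have hiH : i ∉ H.1 := by
                intro hiH
                have e1 : A K ∈ H.1 := by rw [hKf.2.2]; exact hiH
                have e2 := hno2A H K hHK e1
                exact hHf ⟨hiH, hKH, by rw [e2, hKf.2.2]⟩
              have hAHi : i < A H := by
                by_contra hc
                push_neg at hc
                obtain ⟨s, e, _, _, _, hHe⟩ := h𝕀.1 H.1 H.2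
                have h1 : A H ∈ H.1 := hA.1 H
                rw [hHe, Finset.mem_Icc] at h1
                have h2 := hKH
                rw [hHe, Finset.mem_Icc] at h2
                exact hiH (by rw [hHe, Finset.mem_Icc]; omega)
              have hHnotS : A H = B H := by
                rcases eq_or_lt_of_le (hAB H) with h | h
                · exact h
                · have := hmaxi H h; omega
              rcases lt_trichotomy (A H) j with h | h | h
              · have hAHH0 : A H ∈ H0.1 :=
                  edge_convex h𝕀 H0 hiH0 hjH0 (le_of_lt hAHi) (le_of_lt h)
                have e1 : B H0 ∈ H.1 := by rw [← hj]; exact hKH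
                have e2 : B H ∈ H0.1 := by rw [← hHnotS]; exact hAHH0
                have := hno2B H0 H e1 e2
                omega
              · exact hne' h
              · have hBK : B K = j := hBj K hKf.1 hKf.2.1 hKf.2.2
                have := hno2B K H (hBK ▸ hKH) (hHnotS ▸ hHK)
                rw [hBK, ← hHnotS] at this; omega
            · rw [hsameval H hHf] at hHK ⊢
              rw [hsameval K hKf] at hKH ⊢
              exact hno2A H K hHK hKH
        have hacycA' : AcycOr 𝕀 A' := ⟨horA', acyclic_of_no2 h𝕀 horA' hno2A'⟩
        -- the flip
        have h1i : 1 ≤ i := (edge_bounds h𝕀 H0 hiH0).1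
        have hjn : j ≤ n := (edge_bounds h𝕀 H0 hjH0).2
        have hflip : IsIncFlip n 𝕀 i j A A' := by
          refine ⟨hAneA', h1i, hij, hjn, ?_⟩
          intro H
          constructor
          · intro hne'
            by_cases hHf : i ∈ H.1 ∧ j ∈ H.1 ∧ A H = i
            · exact ⟨hHf.2.2, hflipval H hHf⟩
            · exact absurd (hsameval H hHf).symm hne'
          · intro hiH hjH
            constructor
            · intro h; exact hflipval H ⟨hiH, hjH, h⟩
            · intro h
              by_cases hHf : i ∈ H.1 ∧ j ∈ H.1 ∧ A H = i
              · exact hHf.2.2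
              · rw [hsameval H hHf] at h
                exact absurd h (hnotj H hiH hjH)
        have hstep : FlipStep n 𝕀 A A' := ⟨hA, hacycA', i, j, hflip⟩
        -- measure decreases
        have hμ' : μ A' ≤ m := by
          have hlt : μ A' < μ A := by
            rw [hμ]
            apply Finset.sum_lt_sum
            · intro H _
              have h1 := hAA' H
              have h2 := hA'B H
              omega
            · refine ⟨H0, Finset.mem_univ _, ?_⟩
              have h1 := hAA' H0
              have h2 := hA'B H0
              rw [hH0flip]
              have := (Finset.mem_filter.1 hH0S).2
              omega
          omega
        exact Relation.ReflTransGen.head hstep (IH A' hacycA' hA'B hμ')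
  exact main (μ A) A hA hAB (le_refl _)

end Flips
section Greedy

variable (n : ℕ) (𝕀 : Finset (Finset ℕ)) (f : Edge 𝕀 → ℕ)

/-- Elements that may be placed next in the greedy process (join version). -/
def OkSet (P : Finset ℕ) : Set ℕ :=
  {x | x ∈ Finset.Icc 1 n ∧ x ∉ P ∧
    ∀ H : Edge 𝕀, (∀ y ∈ H.1, y ∉ P) → x ∈ H.1 → f H ≤ x}

noncomputable def pickMin (P : Finset ℕ) : ℕ := sInf (OkSet n 𝕀 f P)

noncomputable def run : ℕ → Finset ℕ
  | 0 => ∅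
  | t + 1 => insert (pickMin n 𝕀 f (run t)) (run t)

noncomputable def pick (t : ℕ) : ℕ := pickMin n 𝕀 f (run n 𝕀 f t)

variable {n 𝕀 f}

lemma okSet_nonempty (h𝕀 : IsIntervalHypergraph n 𝕀) (hf1 : ∀ H : Edge 𝕀, f H ∈ H.1)
    {P : Finset ℕ} (hP : P ⊆ Finset.Icc 1 n) (hne : P ≠ Finset.Icc 1 n) :
    (OkSet n 𝕀 f P).Nonempty := by
  have hR : (Finset.Icc 1 n \ P).Nonempty := by
    rw [Finset.sdiff_nonempty]
    intro hc
    exact hne (le_antisymm hP hc)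
  set x := (Finset.Icc 1 n \ P).max' hR with hx
  have hxmem := (Finset.Icc 1 n \ P).max'_mem hR
  rw [← hx, Finset.mem_sdiff] at hxmem
  refine ⟨x, hxmem.1, hxmem.2, ?_⟩
  intro H hH hxH
  have : f H ∈ Finset.Icc 1 n \ P :=
    Finset.mem_sdiff.2 ⟨edge_subset h𝕀 H (hf1 H), hH _ (hf1 H)⟩
  exact Finset.le_max' _ _ this

lemma run_subset_card (h𝕀 : IsIntervalHypergraph n 𝕀) (hf1 : ∀ H : Edge 𝕀, f H ∈ H.1) :
    ∀ t, t ≤ n → run n 𝕀 f t ⊆ Finset.Icc 1 n ∧ (run n 𝕀 f t).card = t := by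
  intro t
  induction t with
  | zero => intro _; simp [run]
  | succ t IH =>
    intro ht
    obtain ⟨hsub, hcard⟩ := IH (by omega)
    have hne : run n 𝕀 f t ≠ Finset.Icc 1 n := by
      intro hc
      rw [hc] at hcard
      rw [Nat.card_Icc] at hcard
      omega
    have hok := okSet_nonempty h𝕀 hf1 hsub hne
    have hmem := Nat.sInf_mem hok
    have hp : pickMin n 𝕀 f (run n 𝕀 f t) ∈ OkSet n 𝕀 f (run n 𝕀 f t) := hmem
    obtain ⟨h1, h2, _⟩ := hp
    constructor
    · rw [run]
      exact Finset.insert_subset h1 hsub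
    · rw [run, Finset.card_insert_of_notMem h2, hcard]

lemma pick_spec (h𝕀 : IsIntervalHypergraph n 𝕀) (hf1 : ∀ H : Edge 𝕀, f H ∈ H.1)
    {t : ℕ} (ht : t < n) : pick n 𝕀 f t ∈ OkSet n 𝕀 f (run n 𝕀 f t) := by
  obtain ⟨hsub, hcard⟩ := run_subset_card h𝕀 hf1 t (by omega)
  have hne : run n 𝕀 f t ≠ Finset.Icc 1 n := by
    intro hc
    rw [hc, Nat.card_Icc] at hcard
    omega
  exact Nat.sInf_mem (okSet_nonempty h𝕀 hf1 hsub hne)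

lemma mem_run (t : ℕ) : ∀ x ∈ run n 𝕀 f t, ∃ s < t, pick n 𝕀 f s = x := by
  induction t with
  | zero => simp [run]
  | succ t IH =>
    intro x hx
    rw [run, Finset.mem_insert] at hx
    rcases hx with h | h
    · exact ⟨t, by omega, h.symm⟩
    · obtain ⟨s, hs, hp⟩ := IH x h
      exact ⟨s, by omega, hp⟩

lemma run_full (h𝕀 : IsIntervalHypergraph n 𝕀) (hf1 : ∀ H : Edge 𝕀, f H ∈ H.1) :
    run n 𝕀 f n = Finset.Icc 1 n := by
  obtain ⟨hsub, hcard⟩ := run_subset_card h𝕀 hf1 n (le_refl n)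
  apply Finset.eq_of_subset_of_card_le hsub
  rw [Nat.card_Icc, hcard]
  omega

lemma hit_exists (h𝕀 : IsIntervalHypergraph n 𝕀) (hf1 : ∀ H : Edge 𝕀, f H ∈ H.1)
    (H : Edge 𝕀) : ∃ t, t < n ∧ pick n 𝕀 f t ∈ H.1 := by
  obtain ⟨x, hx⟩ := edge_nonempty h𝕀 H
  have : x ∈ run n 𝕀 f n := by
    rw [run_full h𝕀 hf1]
    exact edge_subset h𝕀 H hx
  obtain ⟨s, hs, hp⟩ := mem_run n x this
  exact ⟨s, hs, hp ▸ hx⟩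

noncomputable def hitTime (h𝕀 : IsIntervalHypergraph n 𝕀)
    (hf1 : ∀ H : Edge 𝕀, f H ∈ H.1) (H : Edge 𝕀) : ℕ :=
  Nat.find (hit_exists h𝕀 hf1 H)

noncomputable def gJoin (h𝕀 : IsIntervalHypergraph n 𝕀)
    (hf1 : ∀ H : Edge 𝕀, f H ∈ H.1) (H : Edge 𝕀) : ℕ :=
  pick n 𝕀 f (hitTime h𝕀 hf1 H)

variable (h𝕀 : IsIntervalHypergraph n 𝕀) (hf1 : ∀ H : Edge 𝕀, f H ∈ H.1)

lemma hitTime_lt (H : Edge 𝕀) : hitTime h𝕀 hf1 H < n :=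
  (Nat.find_spec (hit_exists h𝕀 hf1 H)).1

lemma gJoin_mem (H : Edge 𝕀) : gJoin h𝕀 hf1 H ∈ H.1 :=
  (Nat.find_spec (hit_exists h𝕀 hf1 H)).2

lemma hitTime_min (H : Edge 𝕀) {s : ℕ} (hs : s < hitTime h𝕀 hf1 H) :
    pick n 𝕀 f s ∉ H.1 := by
  intro hc
  have hsn : s < n := lt_trans hs (hitTime_lt h𝕀 hf1 H)
  exact Nat.find_min (hit_exists h𝕀 hf1 H) hs ⟨hsn, hc⟩

lemma edge_unhit (H : Edge 𝕀) : ∀ y ∈ H.1, y ∉ run n 𝕀 f (hitTime h𝕀 hf1 H) := by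
  intro y hy hc
  obtain ⟨s, hs, hp⟩ := mem_run _ y hc
  exact hitTime_min h𝕀 hf1 H hs (hp ▸ hy)

lemma gJoin_ge (H : Edge 𝕀) : f H ≤ gJoin h𝕀 hf1 H := by
  have hspec := pick_spec h𝕀 hf1 (hitTime_lt h𝕀 hf1 H)
  exact hspec.2.2 H (edge_unhit h𝕀 hf1 H) (gJoin_mem h𝕀 hf1 H)

lemma gJoin_orientation : IsOrientation 𝕀 (gJoin h𝕀 hf1) :=
  fun H => gJoin_mem h𝕀 hf1 H

lemma gJoin_acyclic : IsAcyclic 𝕀 (gJoin h𝕀 hf1) := by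
  rintro ⟨k, H, hk2, hk0, hstep⟩
  set T := fun p => hitTime h𝕀 hf1 (H p) with hT
  have hmono : ∀ p < k, T p < T (p + 1) := by
    intro p hp
    have h1 : pick n 𝕀 f (T (p + 1)) ∈ (H p).1 := (hstep p hp).1
    have h2 : pick n 𝕀 f (T (p + 1)) ≠ pick n 𝕀 f (T p) := (hstep p hp).2
    rcases lt_trichotomy (T p) (T (p + 1)) with h | h | h
    · exact h
    · exact absurd (by rw [h]) h2
    · exact absurd h1 (hitTime_min h𝕀 hf1 (H p) h)
  have hchain : ∀ p ≤ k, T 0 ≤ T p ∧ (0 < p → T 0 < T p) := by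
    intro p
    induction p with
    | zero => intro _; exact ⟨le_refl _, by omega⟩
    | succ p IH =>
      intro hp
      obtain ⟨h1, _⟩ := IH (by omega)
      have := hmono p (by omega)
      exact ⟨by omega, fun _ => by omega⟩
  have := (hchain k (le_refl k)).2 (by omega)
  rw [hT] at this
  simp only [hk0] at this
  omega

/-- Key minimality property of the greedy join. -/
lemma gJoin_min (closed : ClosedUnderIntersection 𝕀)
    (hfL1 : ∀ K M : Edge 𝕀, M.1 ⊆ K.1 → f K ∈ M.1 → f K ≤ f M)
    {D : Edge 𝕀 → ℕ} (hD : AcycOr 𝕀 D) (hDf : ∀ H, f H ≤ D H) :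
    ∀ H, gJoin h𝕀 hf1 H ≤ D H := by
  intro H
  by_contra hc
  push_neg at hc
  set x := gJoin h𝕀 hf1 H with hx
  set v := D H with hv
  have hvH : v ∈ H.1 := hD.1 H
  have hvx : v < x := hc
  have hno2D : No2 𝕀 D := no2_of_acyclic hD.2
  -- v is not in the run at hitTime H
  have hvnotrun : v ∉ run n 𝕀 f (hitTime h𝕀 hf1 H) :=
    edge_unhit h𝕀 hf1 H v hvH
  have hvIcc : v ∈ Finset.Icc 1 n := edge_subset h𝕀 H hvH
  -- v < x = sInf OkSet, so v ∉ OkSet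
  have hvnotok : v ∉ OkSet n 𝕀 f (run n 𝕀 f (hitTime h𝕀 hf1 H)) :=
    Nat.notMem_of_lt_sInf hvx
  have hK : ∃ K : Edge 𝕀, (∀ y ∈ K.1, y ∉ run n 𝕀 f (hitTime h𝕀 hf1 H)) ∧
      v ∈ K.1 ∧ v < f K := by
    by_contra hcc
    push_neg at hcc
    exact hvnotok ⟨hvIcc, hvnotrun, fun K h1 h2 => hcc K h1 h2⟩
  obtain ⟨K, hKunhit, hvK, hvfK⟩ := hK
  -- M := H ∩ K
  have hMmem : H.1 ∩ K.1 ∈ 𝕀 := closed H.1 H.2 K.1 K.2 ⟨v, Finset.mem_inter.2 ⟨hvH, hvK⟩⟩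
  set M : Edge 𝕀 := ⟨H.1 ∩ K.1, hMmem⟩ with hM
  have hMK : M.1 ⊆ K.1 := Finset.inter_subset_right
  have hMH : M.1 ⊆ H.1 := Finset.inter_subset_left
  -- D M = v
  have hDM : D M = v := by
    have e1 : D M ∈ H.1 := hMH (hD.1 M)
    have e2 : D H ∈ M.1 := Finset.mem_inter.2 ⟨hvH, hvK⟩
    rw [hv]
    exact hno2D M H e1 e2
  have hfM : f M ≤ v := le_trans (hDf M) (le_of_eq hDM)
  -- f K ∉ H
  have hfKH : f K ∉ H.1 := by
    intro hfKH
    have hfKM : f K ∈ M.1 := Finset.mem_inter.2 ⟨hfKH, hf1 K⟩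
    have := hfL1 K M hMK hfKM
    omega
  obtain ⟨s, e, _, _, _, hHe⟩ := h𝕀.1 H.1 H.2
  have hxH : x ∈ H.1 := gJoin_mem h𝕀 hf1 H
  have hxe : x ≤ e := by rw [hHe, Finset.mem_Icc] at hxH; exact hxH.2
  have hvs : s ≤ v := by rw [hHe, Finset.mem_Icc] at hvH; exact hvH.1
  have hfKe : e < f K := by
    by_contra hcc
    push_neg at hcc
    exact hfKH (by rw [hHe, Finset.mem_Icc]; omega)
  have hxK : x ∈ K.1 := edge_convex h𝕀 K hvK (hf1 K) (le_of_lt hvx) (by omega)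
  have hspec := pick_spec h𝕀 hf1 (hitTime_lt h𝕀 hf1 H)
  have hfx : f K ≤ x := hspec.2.2 K hKunhit hxK
  omega

end Greedy
section GreedyDual

variable (n : ℕ) (𝕀 : Finset (Finset ℕ)) (f : Edge 𝕀 → ℕ)

/-- Elements that may be placed next in the greedy process (meet version). -/
def OkSetD (P : Finset ℕ) : Set ℕ :=
  {x | x ∈ Finset.Icc 1 n ∧ x ∉ P ∧
    ∀ H : Edge 𝕀, (∀ y ∈ H.1, y ∉ P) → x ∈ H.1 → x ≤ f H}

noncomputable def pickMaxD (P : Finset ℕ) : ℕ := sSup (OkSetD n 𝕀 f P)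

noncomputable def runD : ℕ → Finset ℕ
  | 0 => ∅
  | t + 1 => insert (pickMaxD n 𝕀 f (runD t)) (runD t)

noncomputable def pickD (t : ℕ) : ℕ := pickMaxD n 𝕀 f (runD n 𝕀 f t)

variable {n 𝕀 f}

lemma okSetD_bdd (P : Finset ℕ) : BddAbove (OkSetD n 𝕀 f P) :=
  ⟨n, fun y hy => (Finset.mem_Icc.1 hy.1).2⟩

lemma okSetD_nonempty (h𝕀 : IsIntervalHypergraph n 𝕀) (hf1 : ∀ H : Edge 𝕀, f H ∈ H.1)
    {P : Finset ℕ} (hP : P ⊆ Finset.Icc 1 n) (hne : P ≠ Finset.Icc 1 n) :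
    (OkSetD n 𝕀 f P).Nonempty := by
  have hR : (Finset.Icc 1 n \ P).Nonempty := by
    rw [Finset.sdiff_nonempty]
    intro hc
    exact hne (le_antisymm hP hc)
  set x := (Finset.Icc 1 n \ P).min' hR with hx
  have hxmem := (Finset.Icc 1 n \ P).min'_mem hR
  rw [← hx, Finset.mem_sdiff] at hxmem
  refine ⟨x, hxmem.1, hxmem.2, ?_⟩
  intro H hH hxH
  have : f H ∈ Finset.Icc 1 n \ P :=
    Finset.mem_sdiff.2 ⟨edge_subset h𝕀 H (hf1 H), hH _ (hf1 H)⟩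
  exact Finset.min'_le _ _ this

lemma runD_subset_card (h𝕀 : IsIntervalHypergraph n 𝕀) (hf1 : ∀ H : Edge 𝕀, f H ∈ H.1) :
    ∀ t, t ≤ n → runD n 𝕀 f t ⊆ Finset.Icc 1 n ∧ (runD n 𝕀 f t).card = t := by
  intro t
  induction t with
  | zero => intro _; simp [runD]
  | succ t IH =>
    intro ht
    obtain ⟨hsub, hcard⟩ := IH (by omega)
    have hne : runD n 𝕀 f t ≠ Finset.Icc 1 n := by
      intro hc
      rw [hc] at hcard
      rw [Nat.card_Icc] at hcard
      omega
    have hok := okSetD_nonempty h𝕀 hf1 hsub hne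
    have hmem := Nat.sSup_mem hok (okSetD_bdd _)
    have hp : pickMaxD n 𝕀 f (runD n 𝕀 f t) ∈ OkSetD n 𝕀 f (runD n 𝕀 f t) := hmem
    obtain ⟨h1, h2, _⟩ := hp
    constructor
    · rw [runD]
      exact Finset.insert_subset h1 hsub
    · rw [runD, Finset.card_insert_of_notMem h2, hcard]

lemma pickD_spec (h𝕀 : IsIntervalHypergraph n 𝕀) (hf1 : ∀ H : Edge 𝕀, f H ∈ H.1)
    {t : ℕ} (ht : t < n) : pickD n 𝕀 f t ∈ OkSetD n 𝕀 f (runD n 𝕀 f t) := by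
  obtain ⟨hsub, hcard⟩ := runD_subset_card h𝕀 hf1 t (by omega)
  have hne : runD n 𝕀 f t ≠ Finset.Icc 1 n := by
    intro hc
    rw [hc, Nat.card_Icc] at hcard
    omega
  exact Nat.sSup_mem (okSetD_nonempty h𝕀 hf1 hsub hne) (okSetD_bdd _)

lemma mem_runD (t : ℕ) : ∀ x ∈ runD n 𝕀 f t, ∃ s < t, pickD n 𝕀 f s = x := by
  induction t with
  | zero => simp [runD]
  | succ t IH =>
    intro x hx
    rw [runD, Finset.mem_insert] at hx
    rcases hx with h | h
    · exact ⟨t, by omega, h.symm⟩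
    · obtain ⟨s, hs, hp⟩ := IH x h
      exact ⟨s, by omega, hp⟩

lemma runD_full (h𝕀 : IsIntervalHypergraph n 𝕀) (hf1 : ∀ H : Edge 𝕀, f H ∈ H.1) :
    runD n 𝕀 f n = Finset.Icc 1 n := by
  obtain ⟨hsub, hcard⟩ := runD_subset_card h𝕀 hf1 n (le_refl n)
  apply Finset.eq_of_subset_of_card_le hsub
  rw [Nat.card_Icc, hcard]
  omega

lemma hitD_exists (h𝕀 : IsIntervalHypergraph n 𝕀) (hf1 : ∀ H : Edge 𝕀, f H ∈ H.1)
    (H : Edge 𝕀) : ∃ t, t < n ∧ pickD n 𝕀 f t ∈ H.1 := by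
  obtain ⟨x, hx⟩ := edge_nonempty h𝕀 H
  have : x ∈ runD n 𝕀 f n := by
    rw [runD_full h𝕀 hf1]
    exact edge_subset h𝕀 H hx
  obtain ⟨s, hs, hp⟩ := mem_runD n x this
  exact ⟨s, hs, hp ▸ hx⟩

noncomputable def hitTimeD (h𝕀 : IsIntervalHypergraph n 𝕀)
    (hf1 : ∀ H : Edge 𝕀, f H ∈ H.1) (H : Edge 𝕀) : ℕ :=
  Nat.find (hitD_exists h𝕀 hf1 H)

noncomputable def gMeet (h𝕀 : IsIntervalHypergraph n 𝕀)
    (hf1 : ∀ H : Edge 𝕀, f H ∈ H.1) (H : Edge 𝕀) : ℕ :=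
  pickD n 𝕀 f (hitTimeD h𝕀 hf1 H)

variable (h𝕀 : IsIntervalHypergraph n 𝕀) (hf1 : ∀ H : Edge 𝕀, f H ∈ H.1)

lemma hitTimeD_lt (H : Edge 𝕀) : hitTimeD h𝕀 hf1 H < n :=
  (Nat.find_spec (hitD_exists h𝕀 hf1 H)).1

lemma gMeet_mem (H : Edge 𝕀) : gMeet h𝕀 hf1 H ∈ H.1 :=
  (Nat.find_spec (hitD_exists h𝕀 hf1 H)).2

lemma hitTimeD_min (H : Edge 𝕀) {s : ℕ} (hs : s < hitTimeD h𝕀 hf1 H) :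
    pickD n 𝕀 f s ∉ H.1 := by
  intro hc
  have hsn : s < n := lt_trans hs (hitTimeD_lt h𝕀 hf1 H)
  exact Nat.find_min (hitD_exists h𝕀 hf1 H) hs ⟨hsn, hc⟩

lemma edge_unhitD (H : Edge 𝕀) : ∀ y ∈ H.1, y ∉ runD n 𝕀 f (hitTimeD h𝕀 hf1 H) := by
  intro y hy hc
  obtain ⟨s, hs, hp⟩ := mem_runD _ y hc
  exact hitTimeD_min h𝕀 hf1 H hs (hp ▸ hy)

lemma gMeet_le (H : Edge 𝕀) : gMeet h𝕀 hf1 H ≤ f H := by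
  have hspec := pickD_spec h𝕀 hf1 (hitTimeD_lt h𝕀 hf1 H)
  exact hspec.2.2 H (edge_unhitD h𝕀 hf1 H) (gMeet_mem h𝕀 hf1 H)

lemma gMeet_orientation : IsOrientation 𝕀 (gMeet h𝕀 hf1) :=
  fun H => gMeet_mem h𝕀 hf1 H

lemma gMeet_acyclic : IsAcyclic 𝕀 (gMeet h𝕀 hf1) := by
  rintro ⟨k, H, hk2, hk0, hstep⟩
  set T := fun p => hitTimeD h𝕀 hf1 (H p) with hT
  have hmono : ∀ p < k, T p < T (p + 1) := by
    intro p hp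
    have h1 : pickD n 𝕀 f (T (p + 1)) ∈ (H p).1 := (hstep p hp).1
    have h2 : pickD n 𝕀 f (T (p + 1)) ≠ pickD n 𝕀 f (T p) := (hstep p hp).2
    rcases lt_trichotomy (T p) (T (p + 1)) with h | h | h
    · exact h
    · exact absurd (by rw [h]) h2
    · exact absurd h1 (hitTimeD_min h𝕀 hf1 (H p) h)
  have hchain : ∀ p ≤ k, T 0 ≤ T p ∧ (0 < p → T 0 < T p) := by
    intro p
    induction p with
    | zero => intro _; exact ⟨le_refl _, by omega⟩
    | succ p IH =>
      intro hp
      obtain ⟨h1, _⟩ := IH (by omega)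
      have := hmono p (by omega)
      exact ⟨by omega, fun _ => by omega⟩
  have := (hchain k (le_refl k)).2 (by omega)
  rw [hT] at this
  simp only [hk0] at this
  omega

/-- Key maximality property of the greedy meet. -/
lemma gMeet_max (closed : ClosedUnderIntersection 𝕀)
    (hfL1 : ∀ K M : Edge 𝕀, M.1 ⊆ K.1 → f K ∈ M.1 → f M ≤ f K)
    {D : Edge 𝕀 → ℕ} (hD : AcycOr 𝕀 D) (hDf : ∀ H, D H ≤ f H) :
    ∀ H, D H ≤ gMeet h𝕀 hf1 H := by
  intro H
  by_contra hc
  push_neg at hc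
  set x := gMeet h𝕀 hf1 H with hx
  set v := D H with hv
  have hvH : v ∈ H.1 := hD.1 H
  have hvx : x < v := hc
  have hno2D : No2 𝕀 D := no2_of_acyclic hD.2
  have hvnotrun : v ∉ runD n 𝕀 f (hitTimeD h𝕀 hf1 H) :=
    edge_unhitD h𝕀 hf1 H v hvH
  have hvIcc : v ∈ Finset.Icc 1 n := edge_subset h𝕀 H hvH
  have hvnotok : v ∉ OkSetD n 𝕀 f (runD n 𝕀 f (hitTimeD h𝕀 hf1 H)) := by
    intro hcc
    have : v ≤ x := le_csSup (okSetD_bdd _) hcc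
    omega
  have hK : ∃ K : Edge 𝕀, (∀ y ∈ K.1, y ∉ runD n 𝕀 f (hitTimeD h𝕀 hf1 H)) ∧
      v ∈ K.1 ∧ f K < v := by
    by_contra hcc
    push_neg at hcc
    exact hvnotok ⟨hvIcc, hvnotrun, fun K h1 h2 => hcc K h1 h2⟩
  obtain ⟨K, hKunhit, hvK, hvfK⟩ := hK
  have hMmem : H.1 ∩ K.1 ∈ 𝕀 := closed H.1 H.2 K.1 K.2 ⟨v, Finset.mem_inter.2 ⟨hvH, hvK⟩⟩
  set M : Edge 𝕀 := ⟨H.1 ∩ K.1, hMmem⟩ with hM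
  have hMK : M.1 ⊆ K.1 := Finset.inter_subset_right
  have hMH : M.1 ⊆ H.1 := Finset.inter_subset_left
  have hDM : D M = v := by
    have e1 : D M ∈ H.1 := hMH (hD.1 M)
    have e2 : D H ∈ M.1 := Finset.mem_inter.2 ⟨hvH, hvK⟩
    rw [hv]
    exact hno2D M H e1 e2
  have hfM : v ≤ f M := le_trans (le_of_eq hDM.symm) (hDf M)
  have hfKH : f K ∉ H.1 := by
    intro hfKH
    have hfKM : f K ∈ M.1 := Finset.mem_inter.2 ⟨hfKH, hf1 K⟩
    have := hfL1 K M hMK hfKM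
    omega
  obtain ⟨s, e, _, _, _, hHe⟩ := h𝕀.1 H.1 H.2
  have hxH : x ∈ H.1 := gMeet_mem h𝕀 hf1 H
  have hxs : s ≤ x := by rw [hHe, Finset.mem_Icc] at hxH; exact hxH.1
  have hve : v ≤ e := by rw [hHe, Finset.mem_Icc] at hvH; exact hvH.2
  have hfKs : f K < s := by
    by_contra hcc
    push_neg at hcc
    exact hfKH (by rw [hHe, Finset.mem_Icc]; omega)
  have hxK : x ∈ K.1 := edge_convex h𝕀 K (hf1 K) hvK (by omega) (le_of_lt hvx)
  have hspec := pickD_spec h𝕀 hf1 (hitTimeD_lt h𝕀 hf1 H)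
  have hfx : x ≤ f K := hspec.2.2 K hKunhit hxK
  omega

end GreedyDual
section MainParts

variable {n : ℕ} {𝕀 : Finset (Finset ℕ)}

lemma closed_join (h𝕀 : IsIntervalHypergraph n 𝕀) (closed : ClosedUnderIntersection 𝕀)
    {A B : Edge 𝕀 → ℕ} (hA : AcycOr 𝕀 A) (hB : AcycOr 𝕀 B) :
    ∃ C, AcycOr 𝕀 C ∧ leP n 𝕀 A C ∧ leP n 𝕀 B C ∧
      ∀ D, AcycOr 𝕀 D → leP n 𝕀 A D → leP n 𝕀 B D → leP n 𝕀 C D := by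
  set f := fun H : Edge 𝕀 => max (A H) (B H) with hf
  have hf1 : ∀ H : Edge 𝕀, f H ∈ H.1 := by
    intro H
    rcases max_choice (A H) (B H) with h | h
    · rw [hf]; dsimp only; rw [h]; exact hA.1 H
    · rw [hf]; dsimp only; rw [h]; exact hB.1 H
  have hno2A : No2 𝕀 A := no2_of_acyclic hA.2
  have hno2B : No2 𝕀 B := no2_of_acyclic hB.2
  have hfL1 : ∀ K M : Edge 𝕀, M.1 ⊆ K.1 → f K ∈ M.1 → f K ≤ f M := by
    intro K M hMK hfKM
    rcases max_choice (A K) (B K) with h | h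
    · have h' : f K = A K := h
      rw [h'] at hfKM ⊢
      have := hno2A K M hfKM (hMK (hA.1 M))
      rw [this]
      exact le_max_left _ _
    · have h' : f K = B K := h
      rw [h'] at hfKM ⊢
      have := hno2B K M hfKM (hMK (hB.1 M))
      rw [this]
      exact le_max_right _ _
  set C := gJoin h𝕀 hf1 with hC
  have hCac : AcycOr 𝕀 C := ⟨gJoin_orientation h𝕀 hf1, gJoin_acyclic h𝕀 hf1⟩
  have hCge : ∀ H, f H ≤ C H := fun H => gJoin_ge h𝕀 hf1 H
  refine ⟨C, hCac, ?_, ?_, ?_⟩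
  · exact leP_of_mono h𝕀 hA hCac (fun H => le_trans (le_max_left _ _) (hCge H))
  · exact leP_of_mono h𝕀 hB hCac (fun H => le_trans (le_max_right _ _) (hCge H))
  · intro D hD hAD hBD
    have hDf : ∀ H, f H ≤ D H := fun H => max_le (leP_mono hAD H) (leP_mono hBD H)
    exact leP_of_mono h𝕀 hCac hD (gJoin_min h𝕀 hf1 closed hfL1 hD hDf)

lemma closed_meet (h𝕀 : IsIntervalHypergraph n 𝕀) (closed : ClosedUnderIntersection 𝕀)
    {A B : Edge 𝕀 → ℕ} (hA : AcycOr 𝕀 A) (hB : AcycOr 𝕀 B) :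
    ∃ C, AcycOr 𝕀 C ∧ leP n 𝕀 C A ∧ leP n 𝕀 C B ∧
      ∀ D, AcycOr 𝕀 D → leP n 𝕀 D A → leP n 𝕀 D B → leP n 𝕀 D C := by
  set f := fun H : Edge 𝕀 => min (A H) (B H) with hf
  have hf1 : ∀ H : Edge 𝕀, f H ∈ H.1 := by
    intro H
    rcases min_choice (A H) (B H) with h | h
    · rw [hf]; dsimp only; rw [h]; exact hA.1 H
    · rw [hf]; dsimp only; rw [h]; exact hB.1 H
  have hno2A : No2 𝕀 A := no2_of_acyclic hA.2
  have hno2B : No2 𝕀 B := no2_of_acyclic hB.2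
  have hfL1 : ∀ K M : Edge 𝕀, M.1 ⊆ K.1 → f K ∈ M.1 → f M ≤ f K := by
    intro K M hMK hfKM
    rcases min_choice (A K) (B K) with h | h
    · have h' : f K = A K := h
      rw [h'] at hfKM ⊢
      have := hno2A K M hfKM (hMK (hA.1 M))
      rw [this]
      exact min_le_left _ _
    · have h' : f K = B K := h
      rw [h'] at hfKM ⊢
      have := hno2B K M hfKM (hMK (hB.1 M))
      rw [this]
      exact min_le_right _ _
  set C := gMeet h𝕀 hf1 with hC
  have hCac : AcycOr 𝕀 C := ⟨gMeet_orientation h𝕀 hf1, gMeet_acyclic h𝕀 hf1⟩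
  have hCle : ∀ H, C H ≤ f H := fun H => gMeet_le h𝕀 hf1 H
  refine ⟨C, hCac, ?_, ?_, ?_⟩
  · exact leP_of_mono h𝕀 hCac hA (fun H => le_trans (hCle H) (min_le_left _ _))
  · exact leP_of_mono h𝕀 hCac hB (fun H => le_trans (hCle H) (min_le_right _ _))
  · intro D hD hDA hDB
    have hDf : ∀ H, D H ≤ f H := fun H => le_min (leP_mono hDA H) (leP_mono hDB H)
    exact leP_of_mono h𝕀 hD hCac (gMeet_max h𝕀 hf1 closed hfL1 hD hDf)

end MainParts
section NotClosed

variable {n : ℕ} {𝕀 : Finset (Finset ℕ)}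

lemma no2_of_rank {O : Edge 𝕀 → ℕ} (ρ : ℕ → ℕ)
    (hmin : ∀ H : Edge 𝕀, ∀ y ∈ H.1, ρ (O H) ≤ ρ y)
    (hinj : Function.Injective ρ) : No2 𝕀 O := by
  intro P Q h1 h2
  exact hinj (le_antisymm (hmin P (O Q) h2) (hmin Q (O P) h1))

/-- Bad quadruple: a witness of non-closedness in normal form. -/
def BadQ (𝕀 : Finset (Finset ℕ)) (a b c d : ℕ) : Prop :=
  Finset.Icc a b ∈ 𝕀 ∧ Finset.Icc c d ∈ 𝕀 ∧ a < c ∧ c ≤ b ∧ b < d ∧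
    Finset.Icc c b ∉ 𝕀

lemma exists_badQ (h𝕀 : IsIntervalHypergraph n 𝕀)
    (hnc : ¬ClosedUnderIntersection 𝕀) : ∃ a b c d, BadQ 𝕀 a b c d := by
  rw [ClosedUnderIntersection] at hnc
  push_neg at hnc
  obtain ⟨I, hI, J, hJ, hne, hnotmem⟩ := hnc
  obtain ⟨a1, b1, _, hab1, _, hIe⟩ := h𝕀.1 I hI
  obtain ⟨c1, d1, _, hcd1, _, hJe⟩ := h𝕀.1 J hJ
  have hinter : I ∩ J = Finset.Icc (max a1 c1) (min b1 d1) := by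
    rw [hIe, hJe]; ext x; simp [Finset.mem_Icc]; omega
  have hnonemp : max a1 c1 ≤ min b1 d1 := by
    obtain ⟨x, hx⟩ := hne
    rw [hinter, Finset.mem_Icc] at hx
    omega
  rcases lt_trichotomy a1 c1 with h | h | h
  · -- a1 < c1
    have hbd : b1 < d1 := by
      by_contra hc
      push_neg at hc
      apply hnotmem
      have : I ∩ J = J := by rw [hinter, hJe]; congr 1 <;> omega
      rw [this]; exact hJ
    refine ⟨a1, b1, c1, d1, hIe ▸ hI, hJe ▸ hJ, h, by omega, hbd, ?_⟩
    have : Finset.Icc c1 b1 = I ∩ J := by rw [hinter]; congr 1 <;> omega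
    rw [this]; exact hnotmem
  · -- a1 = c1
    exfalso
    apply hnotmem
    rcases le_total b1 d1 with h2 | h2
    · have : I ∩ J = I := by rw [hinter, hIe]; congr 1 <;> omega
      rw [this]; exact hI
    · have : I ∩ J = J := by rw [hinter, hJe]; congr 1 <;> omega
      rw [this]; exact hJ
  · -- c1 < a1
    have hdb : d1 < b1 := by
      by_contra hc
      push_neg at hc
      apply hnotmem
      have : I ∩ J = I := by rw [hinter, hIe]; congr 1 <;> omega
      rw [this]; exact hI
    refine ⟨c1, d1, a1, b1, hJe ▸ hJ, hIe ▸ hI, h, by omega, hdb, ?_⟩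
    have : Finset.Icc a1 d1 = I ∩ J := by rw [hinter]; congr 1 <;> omega
    rw [this]; exact hnotmem

lemma notClosed_noJoin (h𝕀 : IsIntervalHypergraph n 𝕀)
    (hnc : ¬ClosedUnderIntersection 𝕀)
    (hlat : ∀ A B : Edge 𝕀 → ℕ, AcycOr 𝕀 A → AcycOr 𝕀 B →
      (∃ C, AcycOr 𝕀 C ∧ leP n 𝕀 A C ∧ leP n 𝕀 B C ∧
        ∀ D, AcycOr 𝕀 D → leP n 𝕀 A D → leP n 𝕀 B D → leP n 𝕀 C D)) : False := by
  classical
  -- minimal span bad quadruple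
  have hbadex := exists_badQ h𝕀 hnc
  set SP : Set ℕ := {m | ∃ a b c d, BadQ 𝕀 a b c d ∧ d - a = m} with hSP
  have hSPne : SP.Nonempty := by
    obtain ⟨a, b, c, d, hbad⟩ := hbadex
    exact ⟨d - a, a, b, c, d, hbad, rfl⟩
  obtain ⟨a, b, c, d, hbad, hspan⟩ := Nat.sInf_mem hSPne
  obtain ⟨hIb, hJb, hac, hcb', hbd, hIccb⟩ := hbad
  -- c < b
  have h1a : 1 ≤ a := by
    have : a ∈ Finset.Icc a b := Finset.mem_Icc.2 ⟨le_refl _, by omega⟩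
    exact (edge_bounds h𝕀 ⟨_, hIb⟩ this).1
  have hdn : d ≤ n := by
    have : d ∈ Finset.Icc c d := Finset.mem_Icc.2 ⟨by omega, le_refl _⟩
    exact (edge_bounds h𝕀 ⟨_, hJb⟩ this).2
  have hcb : c < b := by
    rcases eq_or_lt_of_le hcb' with h | h
    · exfalso
      apply hIccb
      rw [h, Finset.Icc_self]
      exact h𝕀.2 b (by omega) (by omega)
    · exact h
  -- minimality consequence
  have hM1 : ∀ e, b < e → e < d → Finset.Icc c e ∈ 𝕀 → False := by
    intro e he1 he2 hmem
    have hbad' : BadQ 𝕀 a b c e := ⟨hIb, hmem, hac, hcb', he1, hIccb⟩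
    have : e - a ∈ SP := ⟨a, b, c, e, hbad', rfl⟩
    have := Nat.sInf_le this
    omega
  set I : Edge 𝕀 := ⟨Finset.Icc a b, hIb⟩ with hIdef
  set J : Edge 𝕀 := ⟨Finset.Icc c d, hJb⟩ with hJdef
  -- the four orientations
  set AA := fun H : Edge 𝕀 =>
    if b ∈ H.1 ∧ ∀ y ∈ H.1, c ≤ y then b else H.1.min' (edge_nonempty h𝕀 H) with hAA
  set BB := fun H : Edge 𝕀 =>
    if c ∈ H.1 then c else H.1.min' (edge_nonempty h𝕀 H) with hBB
  set D1 := fun H : Edge 𝕀 =>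
    if d ∈ H.1 then d else if c ∈ H.1 then c else if b ∈ H.1 then b
    else H.1.min' (edge_nonempty h𝕀 H) with hD1
  set D2 := fun H : Edge 𝕀 =>
    if b ∈ H.1 then b else if c ∈ H.1 then c
    else H.1.min' (edge_nonempty h𝕀 H) with hD2
  -- orientations
  have horAA : IsOrientation 𝕀 AA := by
    intro H
    rw [hAA]; dsimp only; split
    · rename_i h; exact h.1
    · exact Finset.min'_mem _ _
  have horBB : IsOrientation 𝕀 BB := by
    intro H
    rw [hBB]; dsimp only; split
    · rename_i h; exact h
    · exact Finset.min'_mem _ _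
  have horD1 : IsOrientation 𝕀 D1 := by
    intro H
    rw [hD1]; dsimp only
    split
    · rename_i h; exact h
    · split
      · rename_i h; exact h
      · split
        · rename_i h; exact h
        · exact Finset.min'_mem _ _
  have horD2 : IsOrientation 𝕀 D2 := by
    intro H
    rw [hD2]; dsimp only
    split
    · rename_i h; exact h
    · split
      · rename_i h; exact h
      · exact Finset.min'_mem _ _
  -- acyclicity via ranks
  have hacAA : AcycOr 𝕀 AA := by
    refine ⟨horAA, acyclic_of_no2 h𝕀 horAA (no2_of_rank
      (fun x => if x = b then c else if x < c then x else x + n + 1) ?_ ?_)⟩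
    · intro H y hy
      rw [hAA]; dsimp only
      split
      · rename_i h
        have hcy := h.2 y hy
        split_ifs <;> omega
      · rename_i h
        set m := H.1.min' (edge_nonempty h𝕀 H) with hm
        have hmH : m ∈ H.1 := Finset.min'_mem _ _
        have hmy : m ≤ y := Finset.min'_le _ _ hy
        by_cases hall : ∀ y ∈ H.1, c ≤ y
        · have hbH : b ∉ H.1 := fun hbH => h ⟨hbH, hall⟩
          have hmb : m ≠ b := fun hc => hbH (hc ▸ hmH)
          have hyb : y ≠ b := fun hc => hbH (hc ▸ hy)
          have hcm := hall m hmH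
          have hcy := hall y hy
          split_ifs <;> omega
        · push_neg at hall
          obtain ⟨y0, hy0, hy0c⟩ := hall
          have hmy0 : m ≤ y0 := Finset.min'_le _ _ hy0
          have hmc : m < c := by omega
          split_ifs <;> omega
    · intro x y h
      simp only at h
      split_ifs at h <;> omega
  have hacBB : AcycOr 𝕀 BB := by
    refine ⟨horBB, acyclic_of_no2 h𝕀 horBB (no2_of_rank
      (fun x => if x = c then 0 else x + 1) ?_ ?_)⟩
    · intro H y hy
      rw [hBB]; dsimp only
      split
      · rename_i h
        split_ifs <;> omega
      · rename_i h
        set m := H.1.min' (edge_nonempty h𝕀 H) with hm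
        have hmH : m ∈ H.1 := Finset.min'_mem _ _
        have hmy : m ≤ y := Finset.min'_le _ _ hy
        have hmc : m ≠ c := fun hc => h (hc ▸ hmH)
        have hyc : y ≠ c := fun hc => h (hc ▸ hy)
        split_ifs <;> omega
    · intro x y h
      simp only at h
      split_ifs at h <;> omega
  have hacD1 : AcycOr 𝕀 D1 := by
    refine ⟨horD1, acyclic_of_no2 h𝕀 horD1 (no2_of_rank
      (fun x => if x = d then 0 else if x = c then 1 else if x = b then 2 else x + 3)
      ?_ ?_)⟩
    · intro H y hy
      rw [hD1]; dsimp only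
      by_cases hd : d ∈ H.1
      · simp only [if_pos hd]
        split_ifs <;> omega
      · simp only [if_neg hd]
        have hyd : y ≠ d := fun hc => hd (hc ▸ hy)
        by_cases hc : c ∈ H.1
        · simp only [if_pos hc]
          split_ifs <;> omega
        · simp only [if_neg hc]
          have hyc : y ≠ c := fun hcc => hc (hcc ▸ hy)
          by_cases hb : b ∈ H.1
          · simp only [if_pos hb]
            split_ifs <;> omega
          · simp only [if_neg hb]
            have hyb : y ≠ b := fun hcc => hb (hcc ▸ hy)
            set m := H.1.min' (edge_nonempty h𝕀 H) with hm
            have hmH : m ∈ H.1 := Finset.min'_mem _ _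
            have hmy : m ≤ y := Finset.min'_le _ _ hy
            have hmd : m ≠ d := fun hcc => hd (hcc ▸ hmH)
            have hmc : m ≠ c := fun hcc => hc (hcc ▸ hmH)
            have hmb : m ≠ b := fun hcc => hb (hcc ▸ hmH)
            split_ifs <;> omega
    · intro x y h
      simp only at h
      split_ifs at h <;> omega
  have hacD2 : AcycOr 𝕀 D2 := by
    refine ⟨horD2, acyclic_of_no2 h𝕀 horD2 (no2_of_rank
      (fun x => if x = b then 0 else if x = c then 1 else x + 2) ?_ ?_)⟩
    · intro H y hy
      rw [hD2]; dsimp only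
      by_cases hb : b ∈ H.1
      · simp only [if_pos hb]
        split_ifs <;> omega
      · simp only [if_neg hb]
        have hyb : y ≠ b := fun hc => hb (hc ▸ hy)
        by_cases hc : c ∈ H.1
        · simp only [if_pos hc]
          split_ifs <;> omega
        · simp only [if_neg hc]
          have hyc : y ≠ c := fun hcc => hc (hcc ▸ hy)
          set m := H.1.min' (edge_nonempty h𝕀 H) with hm
          have hmH : m ∈ H.1 := Finset.min'_mem _ _
          have hmy : m ≤ y := Finset.min'_le _ _ hy
          have hmb : m ≠ b := fun hcc => hb (hcc ▸ hmH)
          have hmc : m ≠ c := fun hcc => hc (hcc ▸ hmH)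
          split_ifs <;> omega
    · intro x y h
      simp only at h
      split_ifs at h <;> omega
  -- pointwise bounds
  have hmin_le : ∀ (H : Edge 𝕀) (z : ℕ), z ∈ H.1 →
      H.1.min' (edge_nonempty h𝕀 H) ≤ z := fun H z hz => Finset.min'_le _ _ hz
  have hAD1 : ∀ H, AA H ≤ D1 H := by
    intro H
    rw [hAA]; dsimp only
    split
    · rename_i h
      rw [hD1]; dsimp only
      by_cases hd : d ∈ H.1
      · simp only [if_pos hd]; omega
      · simp only [if_neg hd]
        by_cases hc : c ∈ H.1
        · exfalso
          obtain ⟨s, e, hs1, hse, hen, hHe⟩ := h𝕀.1 H.1 H.2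
          have hsH : s ∈ H.1 := by rw [hHe]; exact Finset.mem_Icc.2 ⟨le_refl _, hse⟩
          have hcs : c ≤ s := h.2 s hsH
          have hsc : s ≤ c := by
            have := hc; rw [hHe, Finset.mem_Icc] at this; exact this.1
          have hbe : b ≤ e := by
            have := h.1; rw [hHe, Finset.mem_Icc] at this; exact this.2
          have hed : e < d := by
            by_contra hcc
            push_neg at hcc
            exact hd (by rw [hHe, Finset.mem_Icc]; omega)
          rcases eq_or_lt_of_le hbe with hbe' | hbe'
          · apply hIccb
            have : Finset.Icc c b = H.1 := by rw [hHe]; congr 1; omega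
            rw [this]; exact H.2
          · apply hM1 e hbe' hed
            have : Finset.Icc c e = H.1 := by rw [hHe]; congr 1; omega
            rw [this]; exact H.2
        · simp only [if_neg hc, if_pos h.1]
          omega
    · exact hmin_le H _ (horD1 H)
  have hBD1 : ∀ H, BB H ≤ D1 H := by
    intro H
    rw [hBB]; dsimp only
    split
    · rename_i h
      rw [hD1]; dsimp only
      split_ifs <;> omega
    · exact hmin_le H _ (horD1 H)
  have hAD2 : ∀ H, AA H ≤ D2 H := by
    intro H
    rw [hAA]; dsimp only
    split
    · rename_i h
      rw [hD2]; dsimp only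
      simp only [if_pos h.1]
      omega
    · exact hmin_le H _ (horD2 H)
  have hBD2 : ∀ H, BB H ≤ D2 H := by
    intro H
    rw [hBB]; dsimp only
    split
    · rename_i h
      rw [hD2]; dsimp only
      split_ifs <;> omega
    · exact hmin_le H _ (horD2 H)
  -- values on I and J
  have hBI : BB I = c := by
    rw [hBB]; dsimp only
    rw [if_pos (show c ∈ I.1 from Finset.mem_Icc.2 ⟨by omega, by omega⟩)]
  have hAJ : AA J = b := by
    rw [hAA]; dsimp only
    rw [if_pos]
    constructor
    · exact Finset.mem_Icc.2 ⟨by omega, by omega⟩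
    · intro y hy; exact (Finset.mem_Icc.1 hy).1
  have hD1I : D1 I = c := by
    rw [hD1]; dsimp only
    rw [if_neg, if_pos]
    · exact Finset.mem_Icc.2 ⟨by omega, by omega⟩
    · intro hcc
      rw [Finset.mem_Icc] at hcc
      omega
  have hD2J : D2 J = b := by
    rw [hD2]; dsimp only
    rw [if_pos (show b ∈ J.1 from Finset.mem_Icc.2 ⟨by omega, by omega⟩)]
  -- apply the lattice hypothesis
  obtain ⟨C, hCac, hAC, hBC, hCmin⟩ := hlat AA BB hacAA hacBB
  have hCD1 : leP n 𝕀 C D1 := hCmin D1 hacD1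
    (leP_of_mono h𝕀 hacAA hacD1 hAD1) (leP_of_mono h𝕀 hacBB hacD1 hBD1)
  have hCD2 : leP n 𝕀 C D2 := hCmin D2 hacD2
    (leP_of_mono h𝕀 hacAA hacD2 hAD2) (leP_of_mono h𝕀 hacBB hacD2 hBD2)
  have hCI : C I = c := by
    have h1 : BB I ≤ C I := leP_mono hBC I
    have h2 : C I ≤ D1 I := leP_mono hCD1 I
    rw [hBI] at h1
    rw [hD1I] at h2
    omega
  have hCJ : C J = b := by
    have h1 : AA J ≤ C J := leP_mono hAC J
    have h2 : C J ≤ D2 J := leP_mono hCD2 J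
    rw [hAJ] at h1
    rw [hD2J] at h2
    omega
  have hno2C : No2 𝕀 C := no2_of_acyclic hCac.2
  have : C I = C J := by
    apply hno2C I J
    · rw [hCI]; exact Finset.mem_Icc.2 ⟨by omega, by omega⟩
    · rw [hCJ]; exact Finset.mem_Icc.2 ⟨by omega, by omega⟩
  rw [hCI, hCJ] at this
  omega

end NotClosed
/-- For an interval hypergraph `𝕀` on `[n]`, the hypergraphic poset
`P_𝕀` is a lattice (every pair of acyclic orientations admits a least upper bound and
a greatest lower bound) if and only if `𝕀` is closed under intersection. -/
theorem stmt0 (n : ℕ) (hn : 1 ≤ n) (𝕀 : Finset (Finset ℕ))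
    (h𝕀 : IsIntervalHypergraph n 𝕀) :
    (∀ A B : Edge 𝕀 → ℕ, AcycOr 𝕀 A → AcycOr 𝕀 B →
      (∃ C, AcycOr 𝕀 C ∧ leP n 𝕀 A C ∧ leP n 𝕀 B C ∧
        ∀ D, AcycOr 𝕀 D → leP n 𝕀 A D → leP n 𝕀 B D → leP n 𝕀 C D) ∧
      (∃ C, AcycOr 𝕀 C ∧ leP n 𝕀 C A ∧ leP n 𝕀 C B ∧
        ∀ D, AcycOr 𝕀 D → leP n 𝕀 D A → leP n 𝕀 D B → leP n 𝕀 D C)) ↔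
    ClosedUnderIntersection 𝕀 := by
  
  constructor
  · intro hlat
    by_contra hnc
    exact notClosed_noJoin h𝕀 hnc (fun A B hA hB => (hlat A B hA hB).1)
  · intro hclosed A B hA hB
    exact ⟨closed_join h𝕀 hclosed hA hB, closed_meet h𝕀 hclosed hA hB⟩

end IHL
end

section
/- Let ℋ be a hypergraph on [n] and A an acyclic orientation of ℋ. Then for every permutation π of [n], Or_π = A if and only if π is a linear extension of the partial order ≺_A. In other words, the fiber Or⁻¹(A) is exactly the set of linear extensions of ≺_A. -/
namespace IHL

/-- For a hypergraph `ℋ` on `[n]` and an acyclic orientation `A`,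
a permutation `π` of `[n]` satisfies `Or_π = A` if and only if `π` is a linear
extension of `≺_A`. -/
theorem stmt5 (n : ℕ) (hn : 1 ≤ n) (ℋ : Finset (Finset ℕ))
    (hℋ : IsHypergraph n ℋ) (A : Edge ℋ → ℕ) (hA : AcycOr ℋ A)
    (π : Equiv.Perm ℕ) (hπ : IsPermOn n π) :
    orMap ℋ π = A ↔ ∀ a b, prec ℋ A a b → π.symm a < π.symm b := by
  constructor
  · intro hor a b hab
    have base : ∀ a b : ℕ, (∃ H : Edge ℋ, A H = a ∧ b ∈ H.1 ∧ b ≠ a) →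
        π.symm a < π.symm b := by
      rintro a b ⟨H, hAH, hbH, hba⟩
      have hne : {p | π p ∈ H.1}.Nonempty := by
        obtain ⟨x, hx⟩ := (hℋ.1 H.1 H.2).1
        exact ⟨π.symm x, by simp [hx]⟩
      have hb' : π.symm b ∈ {p | π p ∈ H.1} := by simp [hbH]
      have hle := Nat.sInf_le hb'
      have heq : π (sInf {p | π p ∈ H.1}) = a := by
        have := congrFun hor H
        simpa [orMap, hAH] using this
      have h1 : π.symm a = sInf {p | π p ∈ H.1} := by
        rw [← heq]; simp
      rw [h1]
      refine lt_of_le_of_ne hle ?_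
      intro hcontra
      apply hba
      rw [← heq, hcontra]
      simp
    induction hab with
    | single h => exact base _ _ h
    | tail _ h ih => exact lt_trans ih (base _ _ h)
  · intro hle
    funext H
    unfold orMap
    have hne : {p | π p ∈ H.1}.Nonempty := by
      obtain ⟨x, hx⟩ := (hℋ.1 H.1 H.2).1
      exact ⟨π.symm x, by simp [hx]⟩
    set m := sInf {p | π p ∈ H.1} with hm
    have hmem : π m ∈ H.1 := Nat.sInf_mem hne
    by_contra hneq
    have hprec : prec ℋ A (A H) (π m) :=
      Relation.TransGen.single ⟨H, rfl, hmem, hneq⟩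
    have h2 : π.symm (A H) < π.symm (π m) := hle _ _ hprec
    have hAmem : A H ∈ H.1 := hA.1 H
    have h3 : m ≤ π.symm (A H) := Nat.sInf_le (by simp [hAmem])
    simp only [Equiv.symm_apply_apply] at h2
    omega
end IHL
end

section
/- An orientation O of an interval hypergraph 𝕀 on [n] is acyclic if and only if there are no I, J ∈ 𝕀 such that O(I) ∈ J ∖ {O(J)} and O(J) ∈ I ∖ {O(I)}. -/
namespace IHL

lemma mem_of_between {n : ℕ} {𝕀 : Finset (Finset ℕ)} (h𝕀 : IsIntervalHypergraph n 𝕀)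
    {Hs : Finset ℕ} (hH : Hs ∈ 𝕀) {x y z : ℕ} (hx : x ∈ Hs) (hy : y ∈ Hs)
    (h1 : x ≤ z) (h2 : z ≤ y) : z ∈ Hs := by
  obtain ⟨a, b, _, _, _, rfl⟩ := h𝕀.1 Hs hH
  simp only [Finset.mem_Icc] at *
  omega

lemma key_cycle {n : ℕ} {𝕀 : Finset (Finset ℕ)} (h𝕀 : IsIntervalHypergraph n 𝕀)
    {O : Edge 𝕀 → ℕ} (hO : IsOrientation 𝕀 O) :
    ∀ k, 2 ≤ k → ∀ H : ℕ → Edge 𝕀, H k = H 0 →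
      (∀ p < k, O (H (p + 1)) ∈ (H p).1 ∧ O (H (p + 1)) ≠ O (H p)) →
      ∃ I J : Edge 𝕀, O I ∈ J.1 ∧ O I ≠ O J ∧ O J ∈ I.1 ∧ O J ≠ O I := by
  intro k
  induction k using Nat.strong_induction_on with
  | _ k ih =>
    intro hk H Hk0 hcyc
    obtain ⟨p, hpmem, hmin⟩ := Finset.exists_min_image (Finset.range k)
      (fun q => O (H q)) ⟨0, Finset.mem_range.mpr (by omega)⟩
    have hpk : p < k := Finset.mem_range.mp hpmem
    set prev : ℕ := if p = 0 then k - 1 else p - 1 with hprevdef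
    have hprevk : prev < k := by rw [hprevdef]; split <;> omega
    have hHprev1 : H (prev + 1) = H p := by
      rw [hprevdef]
      by_cases hp0 : p = 0
      · rw [if_pos hp0, hp0, show k - 1 + 1 = k by omega, Hk0]
      · simp only [if_neg hp0]
        congr 1; omega
    have hc_prev := hcyc prev hprevk
    rw [hHprev1] at hc_prev
    have hc_p := hcyc p hpk
    set s := O (H (p + 1)) with hsdef
    set r := O (H prev) with hrdef
    set m := O (H p) with hmdef
    have hmles : m ≤ s := by
      rcases eq_or_lt_of_le (show p + 1 ≤ k by omega) with h | h
      · have hHe : H (p + 1) = H 0 := by rw [h, Hk0]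
        rw [hsdef, hHe]
        exact hmin 0 (Finset.mem_range.mpr (by omega))
      · exact hmin (p + 1) (Finset.mem_range.mpr h)
    have hmlts : m < s := lt_of_le_of_ne hmles (Ne.symm hc_p.2)
    have hmltr : m < r :=
      lt_of_le_of_ne (hmin prev (Finset.mem_range.mpr hprevk)) hc_prev.2
    by_cases hrs : r ≤ s
    · -- direct 2-cycle: H prev and H p
      refine ⟨H prev, H p, ?_, ?_, hc_prev.1, hmltr.ne⟩
      · exact mem_of_between h𝕀 (H p).2 (hO (H p)) hc_p.1 hmltr.le hrs
      · exact hmltr.ne'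
    · push_neg at hrs
      have hsprev : s ∈ (H prev).1 :=
        mem_of_between h𝕀 (H prev).2 hc_prev.1 (hO (H prev)) hmles hrs.le
      have hk3 : 3 ≤ k := by
        by_contra hk3
        have hk2 : k = 2 := by omega
        subst hk2
        by_cases hp0 : p = 0
        · have : prev = 1 := by rw [hprevdef, if_pos hp0]
          have hsr : s = r := by rw [hsdef, hrdef, this, hp0]
          omega
        · have hp1 : p = 1 := by omega
          have hprev0 : prev = 0 := by rw [hprevdef, if_neg hp0]; omega
          have hsr : s = r := by
            rw [hsdef, hrdef, hprev0, hp1, show (1:ℕ) + 1 = 2 from rfl, Hk0]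
          omega
      -- shorten the cycle by removing index p
      by_cases hp0 : p = 0
      · have hprev : prev = k - 1 := by rw [hprevdef, if_pos hp0]
        apply ih (k - 1) (by omega) (by omega) (fun q => if q < k - 1 then H (q + 1) else H 1)
        · norm_num
        · intro q hq
          simp only [if_pos hq]
          by_cases h1 : q + 1 < k - 1
          · simp only [if_pos h1]
            exact hcyc (q + 1) (by omega)
          · have hq1 : q + 1 = k - 1 := by omega
            simp only [if_neg h1]
            have hHq : H (q + 1) = H prev := by rw [hq1, hprev]
            rw [hHq]
            have hOH1 : O (H 1) = s := by rw [hsdef, hp0]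
            rw [hOH1]
            exact ⟨hsprev, hrs.ne⟩
      · apply ih (k - 1) (by omega) (by omega) (fun q => if q < p then H q else H (q + 1))
        · simp only [if_neg (show ¬ k - 1 < p by omega), if_pos (show 0 < p by omega)]
          rw [show k - 1 + 1 = k by omega, Hk0]
        · intro q hq
          by_cases h1 : q + 1 < p
          · simp only [if_pos h1, if_pos (show q < p by omega)]
            exact hcyc q (by omega)
          · by_cases h2 : q + 1 = p
            · simp only [if_neg (show ¬ q + 1 < p by omega), if_pos (show q < p by omega)]
              have hHq : H q = H prev := by
                rw [hprevdef, if_neg hp0]; congr 1; omega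
              rw [show q + 1 + 1 = p + 1 by omega, hHq, ← hsdef, ← hrdef]
              exact ⟨hsprev, hrs.ne⟩
            · simp only [if_neg (show ¬ q + 1 < p by omega),
                if_neg (show ¬ q < p by omega)]
              exact hcyc (q + 1) (by omega)

/-- An orientation `O` of an interval hypergraph `𝕀` is acyclic
iff there are no `I, J ∈ 𝕀` with `O(I) ∈ J \ {O(J)}` and `O(J) ∈ I \ {O(I)}`. -/
theorem stmt6 (n : ℕ) (hn : 1 ≤ n) (𝕀 : Finset (Finset ℕ))
    (h𝕀 : IsIntervalHypergraph n 𝕀) (O : Edge 𝕀 → ℕ) (hO : IsOrientation 𝕀 O) :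
    IsAcyclic 𝕀 O ↔
      ¬∃ I J : Edge 𝕀, O I ∈ J.1 ∧ O I ≠ O J ∧ O J ∈ I.1 ∧ O J ≠ O I := by
  constructor
  · intro hacyc
    rintro ⟨I, J, h1, h2, h3, h4⟩
    apply hacyc
    refine ⟨2, fun q => if q % 2 = 0 then I else J, le_refl 2, by norm_num, ?_⟩
    intro p hp
    interval_cases p
    · simpa using ⟨h3, h4⟩
    · simpa using ⟨h1, h2⟩
  · intro hno
    rintro ⟨k, H, hk, Hk0, hc⟩
    exact hno (key_cycle h𝕀 hO k hk H Hk0 hc)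
end IHL
end
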